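/- For n ≥ 2 and κ > 0, the quantity β(κ) := c(κ)^2 + n·c(κ)/κ − 1 is strictly positive, where c(κ) = [cos θ]_κ / [1]_κ with [γ]_κ = ∫_0^π γ(cos θ) e^{κ cos θ} sin^{n-2}θ dθ. -/

import Mathlib

open Real intervalIntegral

namespace StmtAux

open MeasureTheory Metric Set

noncomputable def J (m k : ℕ) (x : ℝ) : ℝ :=
  ∫ θ in (0:ℝ)..π, (Real.cos θ) ^ k * Real.exp (x * Real.cos θ) * (Real.sin θ) ^ m

lemma contJ (m k : ℕ) (x : ℝ) :
    Continuous fun θ : ℝ => (Real.cos θ) ^ k * Real.exp (x * Real.cos θ) * (Real.sin θ) ^ m := by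
  fun_prop

lemma intJ (m k : ℕ) (x : ℝ) :
    IntervalIntegrable
      (fun θ : ℝ => (Real.cos θ) ^ k * Real.exp (x * Real.cos θ) * (Real.sin θ) ^ m)
      volume 0 π :=
  (contJ m k x).intervalIntegrable _ _

lemma hasDerivAt_J (m k : ℕ) (x₀ : ℝ) : HasDerivAt (J m k) (J m (k+1) x₀) x₀ := by
  have h := intervalIntegral.hasDerivAt_integral_of_dominated_loc_of_deriv_le
    (F := fun (x : ℝ) (θ : ℝ) => (Real.cos θ) ^ k * Real.exp (x * Real.cos θ) * (Real.sin θ) ^ m)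
    (F' := fun (x : ℝ) (θ : ℝ) =>
      (Real.cos θ) ^ (k+1) * Real.exp (x * Real.cos θ) * (Real.sin θ) ^ m)
    (bound := fun _ => Real.exp (|x₀| + 1))
    (a := 0) (b := π) (μ := volume) (x₀ := x₀) (ball_mem_nhds x₀ one_pos)
    (Filter.Eventually.of_forall fun x => (contJ m k x).aestronglyMeasurable)
    (intJ m k x₀) ((contJ m (k+1) x₀)).aestronglyMeasurable
    ?_ intervalIntegrable_const ?_
  · exact h.2
  · refine .of_forall fun θ _ x hx => ?_
    have h1 : |Real.cos θ| ≤ 1 := Real.abs_cos_le_one θ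
    have h2 : |Real.sin θ| ≤ 1 := Real.abs_sin_le_one θ
    have hp1 : |Real.cos θ| ^ (k+1) ≤ 1 := pow_le_one₀ (abs_nonneg _) h1
    have hp2 : |Real.sin θ| ^ m ≤ 1 := pow_le_one₀ (abs_nonneg _) h2
    have hxabs : |x| ≤ |x₀| + 1 := by
      have hd : |x - x₀| < 1 := by simpa [Real.dist_eq] using hx
      have := abs_sub_abs_le_abs_sub x x₀
      linarith
    have hxc : x * Real.cos θ ≤ |x₀| + 1 := by
      calc x * Real.cos θ ≤ |x * Real.cos θ| := le_abs_self _
        _ = |x| * |Real.cos θ| := abs_mul _ _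
        _ ≤ (|x₀| + 1) * 1 := by
            apply mul_le_mul hxabs h1 (abs_nonneg _) (by positivity)
        _ = |x₀| + 1 := mul_one _
    have he : Real.exp (x * Real.cos θ) ≤ Real.exp (|x₀| + 1) := Real.exp_le_exp.mpr hxc
    have hE : (0:ℝ) < Real.exp (x * Real.cos θ) := Real.exp_pos _
    rw [Real.norm_eq_abs, abs_mul, abs_mul, abs_pow, abs_pow, abs_of_pos hE]
    calc |Real.cos θ| ^ (k+1) * Real.exp (x * Real.cos θ) * |Real.sin θ| ^ m
        ≤ 1 * Real.exp (x * Real.cos θ) * 1 := by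
          apply mul_le_mul (mul_le_mul hp1 le_rfl (le_of_lt hE) zero_le_one) hp2
            (pow_nonneg (abs_nonneg _) m) (by positivity)
      _ = Real.exp (x * Real.cos θ) := by ring
      _ ≤ Real.exp (|x₀| + 1) := he
  · refine .of_forall fun θ _ x _ => ?_
    have hbase : HasDerivAt (fun y : ℝ => y * Real.cos θ) (Real.cos θ) x :=
      hasDerivAt_mul_const (Real.cos θ)
    have h := (hbase.exp.const_mul ((Real.cos θ) ^ k)).mul_const ((Real.sin θ) ^ m)
    refine h.congr_deriv (Eq.symm ?_)
    ring

lemma J_odd_zero (m k : ℕ) (hk : Odd k) : J m k 0 = 0 := by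
  have h1 : (∫ θ in (0:ℝ)..π,
      (Real.cos (π - θ)) ^ k * Real.exp (0 * Real.cos (π - θ)) * (Real.sin (π - θ)) ^ m)
      = J m k 0 := by
    rw [intervalIntegral.integral_comp_sub_left
      (fun θ => (Real.cos θ) ^ k * Real.exp (0 * Real.cos θ) * (Real.sin θ) ^ m) π]
    simp [J]
  have h2 : (∫ θ in (0:ℝ)..π,
      (Real.cos (π - θ)) ^ k * Real.exp (0 * Real.cos (π - θ)) * (Real.sin (π - θ)) ^ m)
      = - J m k 0 := by
    have e : Set.EqOn
        (fun θ => (Real.cos (π - θ)) ^ k * Real.exp (0 * Real.cos (π - θ))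
          * (Real.sin (π - θ)) ^ m)
        (fun θ => -((Real.cos θ) ^ k * Real.exp (0 * Real.cos θ) * (Real.sin θ) ^ m))
        (Set.uIcc (0:ℝ) π) := by
      intro θ _
      simp [Real.cos_pi_sub, Real.sin_pi_sub, hk.neg_pow]
    rw [intervalIntegral.integral_congr e, intervalIntegral.integral_neg]
    rfl
  linarith [h1, h2]

lemma J_zero_pos (m : ℕ) (x : ℝ) : 0 < J m 0 x := by
  apply intervalIntegral.intervalIntegral_pos_of_pos_on (intJ m 0 x) _ Real.pi_pos
  intro θ hθ
  have hs : 0 < Real.sin θ := Real.sin_pos_of_pos_of_lt_pi hθ.1 hθ.2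
  simp only [pow_zero, one_mul]
  positivity

lemma integral_pos_of_nonneg_of_pos_on {f : ℝ → ℝ} (hf : Continuous f)
    (h0 : ∀ θ ∈ Set.Icc (0:ℝ) π, 0 ≤ f θ) {a b : ℝ} (ha : 0 ≤ a) (hb : b ≤ π) (hab : a < b)
    (hpos : ∀ θ ∈ Set.Ioo a b, 0 < f θ) :
    0 < ∫ θ in (0:ℝ)..π, f θ := by
  have e1 : (∫ θ in (0:ℝ)..a, f θ) + (∫ θ in a..b, f θ) = ∫ θ in (0:ℝ)..b, f θ :=
    intervalIntegral.integral_add_adjacent_intervals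
      (hf.intervalIntegrable _ _) (hf.intervalIntegrable _ _)
  have e2 : (∫ θ in (0:ℝ)..b, f θ) + (∫ θ in b..π, f θ) = ∫ θ in (0:ℝ)..π, f θ :=
    intervalIntegral.integral_add_adjacent_intervals
      (hf.intervalIntegrable _ _) (hf.intervalIntegrable _ _)
  have p1 : 0 ≤ ∫ θ in (0:ℝ)..a, f θ :=
    intervalIntegral.integral_nonneg ha
      (fun u hu => h0 u ⟨hu.1, le_trans hu.2 (le_trans (le_of_lt hab) hb)⟩)
  have p2 : 0 < ∫ θ in a..b, f θ :=
    intervalIntegral.intervalIntegral_pos_of_pos_on (hf.intervalIntegrable _ _) hpos hab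
  have p3 : 0 ≤ ∫ θ in b..π, f θ :=
    intervalIntegral.integral_nonneg hb
      (fun u hu => h0 u ⟨le_trans ha (le_trans (le_of_lt hab) hu.1), hu.2⟩)
  linarith

lemma J_CS (m : ℕ) (x : ℝ) : (J m 2 x) ^ 2 < J m 0 x * J m 4 x := by
  have hApos := J_zero_pos m x
  set A := J m 0 x with hA
  have hA0 : A ≠ 0 := ne_of_gt hApos
  set t := J m 2 x / A with ht
  have key : 0 < ∫ θ in (0:ℝ)..π,
      ((Real.cos θ) ^ 2 - t) ^ 2 * Real.exp (x * Real.cos θ) * (Real.sin θ) ^ m := by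
    have hcont : Continuous fun θ : ℝ =>
        ((Real.cos θ) ^ 2 - t) ^ 2 * Real.exp (x * Real.cos θ) * (Real.sin θ) ^ m := by
      fun_prop
    have hπ := Real.pi_pos
    have hnn : ∀ θ ∈ Set.Icc (0:ℝ) π, 0 ≤ ((Real.cos θ) ^ 2 - t) ^ 2
        * Real.exp (x * Real.cos θ) * (Real.sin θ) ^ m := by
      intro θ hθ
      have hs : 0 ≤ Real.sin θ := Real.sin_nonneg_of_nonneg_of_le_pi hθ.1 hθ.2
      exact mul_nonneg (mul_nonneg (sq_nonneg _) (le_of_lt (Real.exp_pos _)))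
        (pow_nonneg hs m)
    rcases le_or_gt t (1/2) with hcase | hcase
    · apply integral_pos_of_nonneg_of_pos_on hcont hnn (le_refl (0:ℝ))
        (by linarith : π/4 ≤ π) (by positivity)
      intro θ hθ
      obtain ⟨hθ1, hθ2⟩ := hθ
      have h1 : Real.cos (π/4) < Real.cos θ :=
        Real.strictAntiOn_cos ⟨le_of_lt hθ1, by linarith⟩
          ⟨by linarith, by linarith⟩ hθ2
      rw [Real.cos_pi_div_four] at h1
      have h2 : (0:ℝ) < Real.sqrt 2 / 2 := by positivity
      have h3 : (Real.sqrt 2 / 2) ^ 2 = 1/2 := by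
        rw [div_pow, Real.sq_sqrt (by norm_num : (0:ℝ) ≤ 2)]; norm_num
      have h4 : (1:ℝ)/2 < (Real.cos θ)^2 := by nlinarith
      have hs : 0 < Real.sin θ := Real.sin_pos_of_pos_of_lt_pi hθ1 (by linarith)
      have h5 : 0 < ((Real.cos θ)^2 - t)^2 := by nlinarith
      exact mul_pos (mul_pos h5 (Real.exp_pos _)) (pow_pos hs m)
    · apply integral_pos_of_nonneg_of_pos_on hcont hnn
        (le_of_lt (by positivity : (0:ℝ) < π/3))
        (by linarith : π/2 ≤ π) (by linarith)
      intro θ hθ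
      obtain ⟨hθ1, hθ2⟩ := hθ
      have hcpos : 0 < Real.cos θ := Real.cos_pos_of_mem_Ioo
        ⟨by linarith, hθ2⟩
      have h1 : Real.cos θ < Real.cos (π/3) :=
        Real.strictAntiOn_cos ⟨by linarith, by linarith⟩
          ⟨le_of_lt (lt_trans (by linarith) hθ1), by linarith⟩ hθ1
      rw [Real.cos_pi_div_three] at h1
      have h4 : (Real.cos θ)^2 < t := by nlinarith
      have hs : 0 < Real.sin θ := Real.sin_pos_of_pos_of_lt_pi
        (by linarith) (by linarith)
      have h5 : 0 < ((Real.cos θ)^2 - t)^2 := by nlinarith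
      exact mul_pos (mul_pos h5 (Real.exp_pos _)) (pow_pos hs m)
  have expand : (∫ θ in (0:ℝ)..π,
      ((Real.cos θ) ^ 2 - t) ^ 2 * Real.exp (x * Real.cos θ) * (Real.sin θ) ^ m)
      = J m 4 x - 2*t*(J m 2 x) + t^2 * A := by
    have e : (fun θ : ℝ => ((Real.cos θ) ^ 2 - t) ^ 2 * Real.exp (x * Real.cos θ)
        * (Real.sin θ) ^ m)
        = fun θ : ℝ =>
          ((Real.cos θ) ^ 4 * Real.exp (x * Real.cos θ) * (Real.sin θ) ^ m
            - (2*t) * ((Real.cos θ) ^ 2 * Real.exp (x * Real.cos θ) * (Real.sin θ) ^ m))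
          + t^2 * ((Real.cos θ) ^ 0 * Real.exp (x * Real.cos θ) * (Real.sin θ) ^ m) := by
      funext θ; ring
    rw [e, intervalIntegral.integral_add (((intJ m 4 x).sub ((intJ m 2 x).const_mul _)))
      ((intJ m 0 x).const_mul _),
      intervalIntegral.integral_sub (intJ m 4 x) ((intJ m 2 x).const_mul _),
      intervalIntegral.integral_const_mul, intervalIntegral.integral_const_mul]
    show J m 4 x - 2*t*(J m 2 x) + t^2 * (J m 0 x) = _
    rw [← hA]
  rw [expand] at key
  have hmul := mul_pos hApos key
  have e2 : A * (J m 4 x - 2*t*(J m 2 x) + t^2 * A) = A * J m 4 x - (J m 2 x)^2 := by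
    rw [ht]; field_simp; ring
  rw [e2] at hmul
  linarith

lemma ibp1 (m : ℕ) (x : ℝ) : ((m:ℝ)+1) * J m 1 x = x * (J m 0 x - J m 2 x) := by
  have hg : ∀ θ ∈ Set.uIcc (0:ℝ) π,
      HasDerivAt (fun θ => Real.exp (x * Real.cos θ) * (Real.sin θ) ^ (m+1))
        (((m:ℝ)+1) * ((Real.cos θ) ^ 1 * Real.exp (x * Real.cos θ) * (Real.sin θ) ^ m)
          - x * ((Real.cos θ) ^ 0 * Real.exp (x * Real.cos θ) * (Real.sin θ) ^ m
            - (Real.cos θ) ^ 2 * Real.exp (x * Real.cos θ) * (Real.sin θ) ^ m)) θ := by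
    intro θ _
    have h1 : HasDerivAt (fun θ => Real.exp (x * Real.cos θ))
        (Real.exp (x * Real.cos θ) * (x * (-Real.sin θ))) θ :=
      ((Real.hasDerivAt_cos θ).const_mul x).exp
    have h2 : HasDerivAt (fun θ => (Real.sin θ) ^ (m+1))
        ((((m:ℕ)+1 : ℕ):ℝ) * (Real.sin θ) ^ m * Real.cos θ) θ := by
      simpa using (Real.hasDerivAt_sin θ).fun_pow (m+1)
    have h := h1.fun_mul h2
    refine h.congr_deriv (Eq.symm ?_)
    have hs : Real.sin θ ^ 2 + Real.cos θ ^ 2 = 1 := Real.sin_sq_add_cos_sq θ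
    push_cast
    linear_combination (x * Real.exp (x * Real.cos θ) * Real.sin θ ^ m) * hs
  have h0 := intervalIntegral.integral_eq_sub_of_hasDerivAt hg
    ((((intJ m 1 x).const_mul _)).sub (((intJ m 0 x).sub (intJ m 2 x)).const_mul _))
  rw [intervalIntegral.integral_sub ((intJ m 1 x).const_mul _)
      (((intJ m 0 x).sub (intJ m 2 x)).const_mul _),
    intervalIntegral.integral_const_mul, intervalIntegral.integral_const_mul,
    intervalIntegral.integral_sub (intJ m 0 x) (intJ m 2 x)] at h0
  have hz : Real.exp (x * Real.cos π) * (Real.sin π) ^ (m+1)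
      - Real.exp (x * Real.cos 0) * (Real.sin 0) ^ (m+1) = 0 := by
    simp [Real.sin_pi]
  rw [hz] at h0
  show ((m:ℝ)+1) * J m 1 x = x * (J m 0 x - J m 2 x)
  unfold J
  linarith [h0]

lemma ibp2 (m : ℕ) (x : ℝ) :
    ((m:ℝ)+2) * J m 2 x - J m 0 x = x * (J m 1 x - J m 3 x) := by
  have hg : ∀ θ ∈ Set.uIcc (0:ℝ) π,
      HasDerivAt (fun θ => Real.cos θ * (Real.exp (x * Real.cos θ) * (Real.sin θ) ^ (m+1)))
        ((((m:ℝ)+2) * ((Real.cos θ) ^ 2 * Real.exp (x * Real.cos θ) * (Real.sin θ) ^ m)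
          - (Real.cos θ) ^ 0 * Real.exp (x * Real.cos θ) * (Real.sin θ) ^ m)
          - x * ((Real.cos θ) ^ 1 * Real.exp (x * Real.cos θ) * (Real.sin θ) ^ m
            - (Real.cos θ) ^ 3 * Real.exp (x * Real.cos θ) * (Real.sin θ) ^ m)) θ := by
    intro θ _
    have h1 : HasDerivAt (fun θ => Real.exp (x * Real.cos θ))
        (Real.exp (x * Real.cos θ) * (x * (-Real.sin θ))) θ :=
      ((Real.hasDerivAt_cos θ).const_mul x).exp
    have h2 : HasDerivAt (fun θ => (Real.sin θ) ^ (m+1))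
        ((((m:ℕ)+1 : ℕ):ℝ) * (Real.sin θ) ^ m * Real.cos θ) θ := by
      simpa using (Real.hasDerivAt_sin θ).fun_pow (m+1)
    have h := (Real.hasDerivAt_cos θ).fun_mul (h1.fun_mul h2)
    refine h.congr_deriv (Eq.symm ?_)
    have hs : Real.sin θ ^ 2 + Real.cos θ ^ 2 = 1 := Real.sin_sq_add_cos_sq θ
    push_cast
    linear_combination (Real.exp (x * Real.cos θ) * Real.sin θ ^ m
      + x * Real.exp (x * Real.cos θ) * Real.cos θ * Real.sin θ ^ m) * hs
  have h0 := intervalIntegral.integral_eq_sub_of_hasDerivAt hg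
    (((((intJ m 2 x).const_mul _)).sub (intJ m 0 x)).sub
      (((intJ m 1 x).sub (intJ m 3 x)).const_mul _))
  rw [intervalIntegral.integral_sub (((intJ m 2 x).const_mul _).sub (intJ m 0 x))
      (((intJ m 1 x).sub (intJ m 3 x)).const_mul _),
    intervalIntegral.integral_sub ((intJ m 2 x).const_mul _) (intJ m 0 x),
    intervalIntegral.integral_const_mul, intervalIntegral.integral_const_mul,
    intervalIntegral.integral_sub (intJ m 1 x) (intJ m 3 x)] at h0
  have hz : Real.cos π * (Real.exp (x * Real.cos π) * (Real.sin π) ^ (m+1))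
      - Real.cos 0 * (Real.exp (x * Real.cos 0) * (Real.sin 0) ^ (m+1)) = 0 := by
    simp [Real.sin_pi]
  rw [hz] at h0
  show ((m:ℝ)+2) * J m 2 x - J m 0 x = x * (J m 1 x - J m 3 x)
  unfold J
  linarith [h0]

noncomputable def G (m : ℕ) (x : ℝ) : ℝ := J m 0 x * J m 3 x - J m 1 x * J m 2 x

lemma G_deriv (m : ℕ) (x : ℝ) :
    HasDerivAt (G m) (J m 0 x * J m 4 x - (J m 2 x) ^ 2) x := by
  have h := ((hasDerivAt_J m 0 x).fun_mul (hasDerivAt_J m 3 x)).fun_sub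
    ((hasDerivAt_J m 1 x).fun_mul (hasDerivAt_J m 2 x))
  refine h.congr_deriv (Eq.symm ?_)
  ring

lemma G_pos (m : ℕ) {x : ℝ} (hx : 0 < x) : 0 < G m x := by
  have hmono : StrictMono (G m) := by
    apply strictMono_of_deriv_pos
    intro y
    rw [(G_deriv m y).deriv]
    have := J_CS m y
    linarith
  have h0 : G m 0 = 0 := by
    have h1 := J_odd_zero m 1 (by decide)
    have h3 := J_odd_zero m 3 (by decide)
    simp [G, h1, h3]
  have := hmono hx
  rwa [h0] at this

end StmtAux

/-- For `n ≥ 2` and `κ > 0`, the quantity `β(κ) = c(κ)² + n·c(κ)/κ − 1` is strictly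
positive, where `c(κ) = [cos θ]_κ / [1]_κ` with
`[γ]_κ = ∫_0^π γ(cos θ) e^{κ cos θ} sin^{n-2}θ dθ`. -/
theorem stmt1 (n : ℕ) (hn : 2 ≤ n) (κ : ℝ) (hκ : 0 < κ)
    (bracket : (ℝ → ℝ) → ℝ)
    (hbracket : ∀ γ : ℝ → ℝ, bracket γ =
      ∫ θ in (0:ℝ)..π, γ (Real.cos θ) * Real.exp (κ * Real.cos θ) * (Real.sin θ) ^ (n - 2))
    (c : ℝ) (hc : c = bracket (fun x => x) / bracket (fun _ => 1)) :
    0 < c ^ 2 + (n : ℝ) * c / κ - 1 := by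
  classical
  set m : ℕ := n - 2 with hm
  have hn2 : n = m + 2 := by omega
  set A := StmtAux.J m 0 κ with hA
  set B := StmtAux.J m 1 κ with hB
  set C := StmtAux.J m 2 κ with hC
  set D := StmtAux.J m 3 κ with hD
  have hbx : bracket (fun x => x) = B := by
    rw [hbracket, hB]
    unfold StmtAux.J
    apply intervalIntegral.integral_congr
    intro θ _
    simp [hm]
  have hb1 : bracket (fun _ => 1) = A := by
    rw [hbracket, hA]
    unfold StmtAux.J
    apply intervalIntegral.integral_congr
    intro θ _
    simp [hm]
  have hApos : 0 < A := StmtAux.J_zero_pos m κ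
  have hG : 0 < A * D - B * C := StmtAux.G_pos m hκ
  have hu : κ * C = κ * A - ((m:ℝ)+1) * B := by
    have := StmtAux.ibp1 m κ
    linarith
  have hv : κ * D = κ * B - ((m:ℝ)+2) * C + A := by
    have := StmtAux.ibp2 m κ
    linarith
  have e : κ^2 * (A * D - B * C)
      = ((m:ℝ)+1) * (κ * B^2 + ((m:ℝ)+2) * A * B - κ * A^2) := by
    linear_combination (κ*A) * hv - (κ*B + ((m:ℝ)+2)*A) * hu
  have hm1 : (0:ℝ) < (m:ℝ)+1 := by positivity
  have hprod : 0 < ((m:ℝ)+1) * (κ * B^2 + ((m:ℝ)+2) * A * B - κ * A^2) := by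
    rw [← e]
    positivity
  have key : 0 < κ * B^2 + ((m:ℝ)+2) * A * B - κ * A^2 := by
    nlinarith [hprod, hm1]
  have hcBA : c = B / A := by rw [hc, hbx, hb1]
  have hA0 : A ≠ 0 := ne_of_gt hApos
  have hκ0 : κ ≠ 0 := ne_of_gt hκ
  have hcast : (n:ℝ) = (m:ℝ) + 2 := by rw [hn2]; push_cast; ring
  have final : c ^ 2 + (n : ℝ) * c / κ - 1
      = (κ * B^2 + ((m:ℝ)+2) * A * B - κ * A^2) / (κ * A^2) := by
    rw [hcBA, hcast]
    field_simp
  rw [final]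
  exact div_pos key (by positivity)
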